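/- Let S be a real symmetric positive definite 2N×2N matrix, and let C be any real symmetric positive definite 2N×2N matrix lying in 𝒢 (equivalently, commuting with J). Then log det C + trace(C⁻¹ S) ≥ log det Ṡ + 2N, with equality if and only if C = Ṡ. (This expresses that under the properness hypothesis the Gaussian maximum-likelihood estimate of the covariance matrix is Ṡ.) -/

import Mathlib

open Matrix Polynomial

/-- The block matrix `J = [[0, -I],[I, 0]]`. -/
def J (N : ℕ) : Matrix (Fin N ⊕ Fin N) (Fin N ⊕ Fin N) ℝ :=
  Matrix.fromBlocks 0 (-1) 1 0

/-- A real `2N × 2N` matrix has the block form `[[G₁, -G₂],[G₂, G₁]]`. -/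
def blockForm {N : ℕ} (G : Matrix (Fin N ⊕ Fin N) (Fin N ⊕ Fin N) ℝ) : Prop :=
  ∃ G₁ G₂ : Matrix (Fin N) (Fin N) ℝ, G = Matrix.fromBlocks G₁ (-G₂) G₂ G₁

/-- The proper part `Ċ` of a real `2N × 2N` matrix `C` with blocks `[[A, B],[B′, D]]`:
`Ċ = (1/2)·[[A+D, B−B′],[B′−B, A+D]]`. -/
noncomputable def dotPart {N : ℕ} (C : Matrix (Fin N ⊕ Fin N) (Fin N ⊕ Fin N) ℝ) :
    Matrix (Fin N ⊕ Fin N) (Fin N ⊕ Fin N) ℝ :=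
  (1/2 : ℝ) • Matrix.fromBlocks (C.toBlocks₁₁ + C.toBlocks₂₂) (C.toBlocks₁₂ - C.toBlocks₂₁)
    (C.toBlocks₂₁ - C.toBlocks₁₂) (C.toBlocks₁₁ + C.toBlocks₂₂)

/-- The improper part `C̈ = C − Ċ`. -/
noncomputable def ddotPart {N : ℕ} (C : Matrix (Fin N ⊕ Fin N) (Fin N ⊕ Fin N) ℝ) :
    Matrix (Fin N ⊕ Fin N) (Fin N ⊕ Fin N) ℝ :=
  C - dotPart C

section Aux

set_option linter.unusedSectionVars false

variable {n : Type*} [Fintype n] [DecidableEq n]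

lemma myTraceEig {A : Matrix n n ℝ} (hA : A.IsHermitian) :
    A.trace = ∑ i, hA.eigenvalues i := by
  conv_lhs => rw [hA.spectral_theorem]
  rw [Unitary.conjStarAlgAut_apply, trace_mul_cycle, Matrix.mem_unitaryGroup_iff'.mp (hA.eigenvectorUnitary).2, one_mul,
    trace_diagonal]
  simp

lemma myDetEig {A : Matrix n n ℝ} (hA : A.IsHermitian) :
    A.det = ∏ i, hA.eigenvalues i := by
  simpa using hA.det_eq_prod_eigenvalues

lemma myConj {A R : Matrix n n ℝ} (hA : A.PosDef) (hR : IsUnit R.det) :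
    (Rᵀ * A * R).PosDef := by
  refine Matrix.PosDef.of_dotProduct_mulVec_pos ?_ (fun x hx => ?_)
  · have h1 : Aᴴ = A := hA.1
    show _ = _
    simp [conjTranspose_mul, h1, ← conjTranspose_eq_transpose_of_trivial, Matrix.mul_assoc]
  · have hxR : R *ᵥ x ≠ 0 := by
      intro h
      exact hx (Matrix.mulVec_injective_iff_isUnit.mpr (isUnit_iff_isUnit_det R |>.2 hR)
        (by simpa using h))
    have := hA.dotProduct_mulVec_pos hxR
    simpa [← Matrix.mulVec_mulVec, Matrix.dotProduct_mulVec, Matrix.vecMul_transpose,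
      star_trivial] using this

lemma myKey {A B : Matrix n n ℝ} (hA : A.PosDef) (hB : B.PosDef) :
    Real.log B.det + Fintype.card n ≤ Real.log A.det + (A⁻¹ * B).trace ∧
    (Real.log A.det + (A⁻¹ * B).trace = Real.log B.det + Fintype.card n ↔ A = B) := by
  have hAu : IsUnit A.det := hA.det_pos.ne'.isUnit
  have hAi : A⁻¹.PosDef := hA.inv
  obtain ⟨R, hRsd, hRR⟩ : ∃ R : Matrix n n ℝ, R.PosSemidef ∧ R * R = A⁻¹ :=
    by open scoped MatrixOrder in exact
    ⟨CFC.sqrt A⁻¹, (CFC.sqrt_nonneg _).posSemidef, CFC.sqrt_mul_sqrt_self _ hAi.posSemidef.nonneg⟩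
  have hRt : Rᵀ = R := by
    rw [← conjTranspose_eq_transpose_of_trivial]; exact hRsd.1
  have hRdet : IsUnit R.det := by
    have h1 : R.det * R.det = A⁻¹.det := by rw [← det_mul, hRR]
    have h2 : A⁻¹.det ≠ 0 := hAi.det_pos.ne'
    exact isUnit_iff_ne_zero.mpr (fun h => h2 (by rw [← h1, h, zero_mul]))
  set P := R * B * R with hPdef
  have hP : P.PosDef := by
    have h := myConj hB hRdet
    rwa [hRt] at h
  have htr : (A⁻¹ * B).trace = P.trace := by
    rw [← hRR, Matrix.mul_assoc, trace_mul_comm]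
  have hdetP : P.det = A⁻¹.det * B.det := by
    rw [hPdef, det_mul, det_mul, ← hRR, det_mul]; ring
  set μ := hP.1.eigenvalues with hμdef
  have hμ : ∀ i, 0 < μ i := hP.eigenvalues_pos
  have htrP : P.trace = ∑ i, μ i := myTraceEig hP.1
  have hdP : P.det = ∏ i, μ i := myDetEig hP.1
  have hlogdetP : Real.log P.det = ∑ i, Real.log (μ i) := by
    rw [hdP, Real.log_prod (fun i _ => (hμ i).ne')]
  have hAdet : A.det * A⁻¹.det = 1 := by
    rw [← det_mul, mul_nonsing_inv _ hAu, det_one]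
  have hld : Real.log P.det = Real.log B.det - Real.log A.det := by
    have hAinv : A⁻¹.det = (A.det)⁻¹ := eq_inv_of_mul_eq_one_right hAdet
    rw [hdetP, hAinv, Real.log_mul (inv_ne_zero hA.det_pos.ne') hB.det_pos.ne',
      Real.log_inv]
    ring
  have hterm : ∀ i, 1 ≤ μ i - Real.log (μ i) := fun i => by
    have := Real.log_le_sub_one_of_pos (hμ i)
    linarith
  have hsum : (Fintype.card n : ℝ) ≤ ∑ i, (μ i - Real.log (μ i)) := by
    calc (Fintype.card n : ℝ) = ∑ _i : n, (1 : ℝ) := by simp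
    _ ≤ _ := Finset.sum_le_sum (fun i _ => hterm i)
  have hsplit : ∑ i, (μ i - Real.log (μ i)) = P.trace - Real.log P.det := by
    rw [htrP, hlogdetP, Finset.sum_sub_distrib]
  constructor
  · rw [htr]; linarith [hsum, hsplit, hld]
  constructor
  · intro heq
    rw [htr] at heq
    have h0 : ∑ i, (μ i - Real.log (μ i) - 1) = 0 := by
      have : ∑ i, (μ i - Real.log (μ i) - 1)
          = ∑ i, (μ i - Real.log (μ i)) - Fintype.card n := by
        rw [Finset.sum_sub_distrib]; simp [Finset.card_univ]
      rw [this, hsplit]; linarith [hld, heq]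
    have hall : ∀ i ∈ Finset.univ, μ i - Real.log (μ i) - 1 = 0 :=
      (Finset.sum_eq_zero_iff_of_nonneg (fun i _ => by linarith [hterm i])).mp h0
    have hμ1 : ∀ i, μ i = 1 := by
      intro i
      by_contra hne
      have h1 := Real.log_lt_sub_one_of_pos (hμ i) hne
      have h2 := hall i (Finset.mem_univ i)
      linarith
    have hP1 : P = 1 := by
      have hsp := hP.1.spectral_theorem
      have hdiag : Matrix.diagonal (RCLike.ofReal ∘ μ : n → ℝ) = 1 := by
        have : (RCLike.ofReal ∘ μ : n → ℝ) = fun _ => 1 := funext fun i => by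
          simp [hμ1 i]
        rw [this, ← Matrix.diagonal_one]
      rw [hsp, hdiag, map_one]
    have hB' : B = R⁻¹ * R⁻¹ := by
      have h1 : R * B * R = 1 := by rw [← hPdef]; exact hP1
      calc B = (R⁻¹ * R) * B * (R * R⁻¹) := by
              rw [Matrix.nonsing_inv_mul _ hRdet, Matrix.mul_nonsing_inv _ hRdet,
                one_mul, mul_one]
        _ = R⁻¹ * (R * B * R) * R⁻¹ := by simp only [Matrix.mul_assoc]
        _ = R⁻¹ * R⁻¹ := by rw [h1, mul_one]
    have hA' : A = R⁻¹ * R⁻¹ := by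
      rw [← Matrix.nonsing_inv_nonsing_inv A hAu, ← hRR, Matrix.mul_inv_rev]
    rw [hA', hB']
  · intro heq
    subst heq
    rw [Matrix.nonsing_inv_mul _ hAu, trace_one]

lemma mySmulPosDef {c : ℝ} (hc : 0 < c) {M : Matrix n n ℝ} (hM : M.PosDef) :
    (c • M).PosDef := by
  refine Matrix.PosDef.of_dotProduct_mulVec_pos ?_ (fun x hx => ?_)
  · show _ = _
    rw [conjTranspose_smul, hM.1.eq]
    simp
  · rw [smul_mulVec, dotProduct_smul]
    exact mul_pos hc (hM.dotProduct_mulVec_pos hx)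

variable {N : ℕ}

lemma hJJt : _root_.J N * (_root_.J N)ᵀ = 1 := by
  rw [← fromBlocks_one]
  simp [_root_.J, fromBlocks_transpose, fromBlocks_multiply]

lemma hJtJ : (_root_.J N)ᵀ * _root_.J N = 1 := by
  rw [← fromBlocks_one]
  simp [_root_.J, fromBlocks_transpose, fromBlocks_multiply]

lemma hdot (S : Matrix (Fin N ⊕ Fin N) (Fin N ⊕ Fin N) ℝ) :
    dotPart S = (1/2 : ℝ) • (S + _root_.J N * S * (_root_.J N)ᵀ) := by
  have hJS : _root_.J N * S * (_root_.J N)ᵀ =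
      fromBlocks S.toBlocks₂₂ (-S.toBlocks₂₁) (-S.toBlocks₁₂) S.toBlocks₁₁ := by
    conv_lhs => rw [← fromBlocks_toBlocks S]
    simp [_root_.J, fromBlocks_transpose, fromBlocks_multiply]
  rw [hJS]
  rw [dotPart]
  congr 1
  conv_rhs => rw [← fromBlocks_toBlocks S]
  simp only [fromBlocks_add, toBlocks_fromBlocks₁₁, toBlocks_fromBlocks₁₂,
    toBlocks_fromBlocks₂₁, toBlocks_fromBlocks₂₂]
  congr 1 <;> abel

lemma hCommJ {C : Matrix (Fin N ⊕ Fin N) (Fin N ⊕ Fin N) ℝ} (h : blockForm C) :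
    C * _root_.J N = _root_.J N * C := by
  obtain ⟨G₁, G₂, rfl⟩ := h
  simp [_root_.J, fromBlocks_multiply]

end Aux

theorem statement10 (N : ℕ) (hN : 1 ≤ N) (S C : Matrix (Fin N ⊕ Fin N) (Fin N ⊕ Fin N) ℝ)
    (hS : S.PosDef) (hC : C.PosDef) (hCb : blockForm C) :
    Real.log (dotPart S).det + 2 * N ≤ Real.log C.det + (C⁻¹ * S).trace ∧
    (Real.log C.det + (C⁻¹ * S).trace = Real.log (dotPart S).det + 2 * N ↔ C = dotPart S) := by
  have hCu : IsUnit C.det := hC.det_pos.ne'.isUnit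
  have hJdet : IsUnit ((_root_.J N)ᵀ).det := by
    have h : ((_root_.J N)ᵀ).det * (_root_.J N).det = 1 := by
      rw [← det_mul, hJtJ, det_one]
    exact IsUnit.of_mul_eq_one _ h
  -- dotPart S is positive definite
  have hJSJ : (_root_.J N * S * (_root_.J N)ᵀ).PosDef := by
    have h := myConj hS hJdet
    rwa [transpose_transpose] at h
  have hdotPD : (dotPart S).PosDef := by
    rw [hdot]
    exact mySmulPosDef (by norm_num) (hS.add hJSJ)
  -- C⁻¹ commutes with J
  have hCJ : C * _root_.J N = _root_.J N * C := hCommJ hCb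
  have hCinvJ : C⁻¹ * _root_.J N = _root_.J N * C⁻¹ := by
    have h1 : C⁻¹ * (C * _root_.J N) * C⁻¹ = C⁻¹ * (_root_.J N * C) * C⁻¹ := by rw [hCJ]
    calc C⁻¹ * _root_.J N = C⁻¹ * (_root_.J N * C) * C⁻¹ := by
          rw [← Matrix.mul_assoc, Matrix.mul_assoc (C⁻¹ * _root_.J N) C C⁻¹,
            Matrix.mul_nonsing_inv _ hCu, mul_one]
      _ = C⁻¹ * (C * _root_.J N) * C⁻¹ := h1.symm
      _ = _root_.J N * C⁻¹ := by
          rw [← Matrix.mul_assoc, Matrix.nonsing_inv_mul _ hCu, one_mul]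
  -- trace equality
  have ht2 : (C⁻¹ * (_root_.J N * S * (_root_.J N)ᵀ)).trace = (C⁻¹ * S).trace := by
    have e1 : C⁻¹ * (_root_.J N * S * (_root_.J N)ᵀ)
        = (_root_.J N * (C⁻¹ * S)) * (_root_.J N)ᵀ := by
      simp only [← Matrix.mul_assoc]
      rw [hCinvJ]
    rw [e1, trace_mul_comm, ← Matrix.mul_assoc, hJtJ, one_mul]
  have htrdot : (C⁻¹ * dotPart S).trace = (C⁻¹ * S).trace := by
    rw [hdot, Matrix.mul_smul, trace_smul, Matrix.mul_add, trace_add, ht2]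
    simp only [smul_eq_mul]
    ring
  have hcard : ((Fintype.card (Fin N ⊕ Fin N) : ℕ) : ℝ) = 2 * N := by
    simp [Fintype.card_sum]
    ring
  obtain ⟨h1, h2⟩ := myKey hC hdotPD
  rw [htrdot, hcard] at h1 h2
  exact ⟨h1, h2⟩
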